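/- Let Q̃ be a symmetric matrix with minimum eigenvalue λ of multiplicity ≥ 2, and let V_t = [[(1−t)I + tQ̃, tg̃],[tg̃ᵀ, t−1]] for t ∈ (0,1). Then the second-smallest eigenvalue of V_t equals 1 − t + tλ, the minimum eigenvalue of (1−t)I + tQ̃. -/

import Mathlib

open Matrix

/-- The bordered matrix `V_t = [[(1-t)I + tQ̃, t g̃],[t g̃ᵀ, t-1]]`. -/
noncomputable def borderedV {n : ℕ} (Qt : Matrix (Fin (n+1)) (Fin (n+1)) ℝ)
    (gt : Fin (n+1) → ℝ) (t : ℝ) : Matrix (Fin (n+1) ⊕ Unit) (Fin (n+1) ⊕ Unit) ℝ :=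
  Matrix.fromBlocks ((1-t) • (1 : Matrix (Fin (n+1)) (Fin (n+1)) ℝ) + t • Qt)
    (Matrix.replicateCol Unit (t • gt)) (Matrix.replicateRow Unit (t • gt)) ((t-1) • (1 : Matrix Unit Unit ℝ))

lemma aux_orth {m : Type*} [Fintype m] [DecidableEq m] {A : Matrix m m ℝ}
    (hA : A.IsHermitian) (k i : m) :
    (⇑(hA.eigenvectorBasis k)) ⬝ᵥ (⇑(hA.eigenvectorBasis i)) = if k = i then 1 else 0 := by
  have h1 : star (hA.eigenvectorUnitary : Matrix m m ℝ) * (hA.eigenvectorUnitary : Matrix m m ℝ)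
      = 1 := mem_unitaryGroup_iff'.mp hA.eigenvectorUnitary.2
  have := congrFun (congrFun h1 k) i
  simpa [Matrix.mul_apply, Matrix.one_apply, Matrix.star_apply, dotProduct] using this

lemma aux_expansion {m : Type*} [Fintype m] [DecidableEq m] {A : Matrix m m ℝ}
    (hA : A.IsHermitian) (x : m → ℝ) :
    x ⬝ᵥ A *ᵥ x = ∑ k, hA.eigenvalues k * ((⇑(hA.eigenvectorBasis k)) ⬝ᵥ x)^2 ∧
    x ⬝ᵥ x = ∑ k, ((⇑(hA.eigenvectorBasis k)) ⬝ᵥ x)^2 := by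
  classical
  set U : Matrix m m ℝ := (hA.eigenvectorUnitary : Matrix m m ℝ) with hUdef
  have h1 : star U * U = 1 := mem_unitaryGroup_iff'.mp hA.eigenvectorUnitary.2
  have h2 : U * star U = 1 := mem_unitaryGroup_iff.mp hA.eigenvectorUnitary.2
  have hck : ∀ k, (star U *ᵥ x) k = (⇑(hA.eigenvectorBasis k)) ⬝ᵥ x := by
    intro k
    simp [Matrix.mulVec, dotProduct, Matrix.star_apply, hUdef]
  have hxU : ∀ z : m → ℝ, x ⬝ᵥ (U *ᵥ z) = (star U *ᵥ x) ⬝ᵥ z := by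
    intro z
    rw [dotProduct_mulVec]
    congr 1
    funext k
    simp [Matrix.vecMul, Matrix.mulVec, dotProduct, Matrix.star_apply, mul_comm]
  constructor
  · conv_lhs => rw [hA.spectral_theorem, Unitary.conjStarAlgAut_apply]
    rw [← Matrix.mulVec_mulVec, ← Matrix.mulVec_mulVec, hxU]
    simp only [dotProduct, Matrix.mulVec_diagonal]
    refine Finset.sum_congr rfl fun k _ => ?_
    rw [show ((RCLike.ofReal ∘ hA.eigenvalues) k : ℝ) = hA.eigenvalues k by simp, hck k,
      show ((⇑(hA.eigenvectorBasis k)) ⬝ᵥ x) = ∑ r, (⇑(hA.eigenvectorBasis k)) r * x r from rfl]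
    ring
  · have hstep : x ⬝ᵥ x = x ⬝ᵥ ((U * star U) *ᵥ x) := by rw [h2, Matrix.one_mulVec]
    rw [hstep, ← Matrix.mulVec_mulVec, hxU]
    simp only [dotProduct]
    refine Finset.sum_congr rfl fun k _ => ?_
    rw [hck k,
      show ((⇑(hA.eigenvectorBasis k)) ⬝ᵥ x) = ∑ r, (⇑(hA.eigenvectorBasis k)) r * x r from rfl]
    ring

theorem second_smallest_eigenvalue {n : ℕ} (Qt : Matrix (Fin (n+1)) (Fin (n+1)) ℝ)
    (gt : Fin (n+1) → ℝ) (lam : ℝ)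
    (hQ : Qt.IsSymm)
    (hlb : ∀ y : Fin (n+1) → ℝ, lam * (∑ i, y i ^ 2) ≤ y ⬝ᵥ Qt.mulVec y)
    (hmult : ∃ v w : Fin (n+1) → ℝ, LinearIndependent ℝ ![v, w] ∧
      Qt.mulVec v = lam • v ∧ Qt.mulVec w = lam • w)
    (hherm : ∀ t : ℝ, (borderedV Qt gt t).IsHermitian)
    (t : ℝ) (ht : t ∈ Set.Ioo (0:ℝ) 1) :
    ∃ σ : (Fin (n+1) ⊕ Unit) ≃ Fin (n+2),
      Monotone (fun i => (hherm t).eigenvalues (σ.symm i)) ∧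
      (hherm t).eigenvalues (σ.symm 1) = 1 - t + t * lam := by
  classical
  obtain ⟨ht0, ht1⟩ := ht
  obtain ⟨v, w, hvw, hv, hw⟩ := hmult
  set μ : ℝ := 1 - t + t * lam with hμdef
  set V : Matrix (Fin (n+1) ⊕ Unit) (Fin (n+1) ⊕ Unit) ℝ := borderedV Qt gt t with hVdef
  set h : V.IsHermitian := hherm t with hhdef
  set B := h.eigenvectorBasis with hBdef
  set ev := h.eigenvalues with hevdef
  -- quadratic form on embedded vectors
  have hquad : ∀ y : Fin (n+1) → ℝ,
      (Sum.elim y (0 : Unit → ℝ)) ⬝ᵥ V *ᵥ (Sum.elim y 0) =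
        (1-t) * (y ⬝ᵥ y) + t * (y ⬝ᵥ Qt *ᵥ y) := by
    intro y
    rw [hVdef, borderedV, Matrix.fromBlocks_mulVec]
    simp only [Sum.elim_comp_inl, Sum.elim_comp_inr, Matrix.mulVec_zero, add_zero,
      sumElim_dotProduct_sumElim, zero_dotProduct, Matrix.add_mulVec,
      Matrix.smul_mulVec, Matrix.one_mulVec, dotProduct_add,
      dotProduct_smul, smul_eq_mul]
  have hnorm : ∀ y : Fin (n+1) → ℝ,
      (Sum.elim y (0 : Unit → ℝ)) ⬝ᵥ (Sum.elim y 0) = y ⬝ᵥ y := by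
    intro y
    simp [sumElim_dotProduct_sumElim]
  have hLz : ∀ x : (Fin (n+1) ⊕ Unit) → ℝ, x (Sum.inr ()) = 0 →
      μ * (x ⬝ᵥ x) ≤ x ⬝ᵥ V *ᵥ x := by
    intro x hx0
    have hxe : x = Sum.elim (fun i => x (Sum.inl i)) 0 := by
      funext r
      rcases r with r | u
      · rfl
      · cases u; simpa using hx0
    rw [hxe, hquad, hnorm]
    have h1 := hlb (fun i => x (Sum.inl i))
    have hyy : (fun i => x (Sum.inl i)) ⬝ᵥ (fun i => x (Sum.inl i))
        = ∑ i, x (Sum.inl i) ^ 2 := by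
      simp [dotProduct, sq]
    rw [hyy, hμdef]
    nlinarith [mul_le_mul_of_nonneg_left h1 ht0.le]
  have hLe : ∀ y : Fin (n+1) → ℝ, Qt *ᵥ y = lam • y →
      (Sum.elim y (0 : Unit → ℝ)) ⬝ᵥ V *ᵥ (Sum.elim y 0) = μ * (y ⬝ᵥ y) := by
    intro y hy
    rw [hquad, hy, dotProduct_smul, smul_eq_mul, hμdef]
    ring
  -- no two eigenvalues strictly below μ
  have hB2 : ∀ i j : Fin (n+1) ⊕ Unit, i ≠ j → ev i < μ → ev j < μ → False := by
    intro i j hij hi hj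
    obtain ⟨a, b, hab, hzero⟩ : ∃ a b : ℝ, ¬(a = 0 ∧ b = 0) ∧
        a * (⇑(B i)) (Sum.inr ()) + b * (⇑(B j)) (Sum.inr ()) = 0 := by
      by_cases hbi : (⇑(B i)) (Sum.inr ()) = 0
      · exact ⟨1, 0, by simp, by simp [hbi]⟩
      · exact ⟨(⇑(B j)) (Sum.inr ()), -(⇑(B i)) (Sum.inr ()),
          fun hc => hbi (by simpa using hc.2), by ring⟩
    set x : (Fin (n+1) ⊕ Unit) → ℝ := fun r => a * (⇑(B i)) r + b * (⇑(B j)) r with hxdef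
    have hx0 : x (Sum.inr ()) = 0 := hzero
    have hc : ∀ k, (⇑(B k)) ⬝ᵥ x = a * (if k = i then 1 else 0) + b * (if k = j then 1 else 0) := by
      intro k
      have h1 : (⇑(B k)) ⬝ᵥ x = a * ((⇑(B k)) ⬝ᵥ (⇑(B i))) + b * ((⇑(B k)) ⬝ᵥ (⇑(B j))) := by
        simp only [hxdef, dotProduct, Finset.mul_sum, mul_add]
        rw [← Finset.sum_add_distrib]
        refine Finset.sum_congr rfl fun r _ => ?_
        ring
      rw [h1, hBdef, aux_orth h k i, aux_orth h k j]
    have hsum1 : ∑ k, ev k * ((⇑(B k)) ⬝ᵥ x)^2 = ev i * a^2 + ev j * b^2 := by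
      have hterm : ∀ k, ev k * ((⇑(B k)) ⬝ᵥ x)^2 =
          (if k = i then ev i * a^2 else 0) + (if k = j then ev j * b^2 else 0) := by
        intro k
        rw [hc k]
        rcases eq_or_ne k i with rfl | hki
        · rw [if_pos rfl, if_neg hij, if_pos rfl, if_neg hij]
          ring
        · rcases eq_or_ne k j with rfl | hkj
          · rw [if_neg hki, if_pos rfl, if_neg hki, if_pos rfl]
            ring
          · rw [if_neg hki, if_neg hkj, if_neg hki, if_neg hkj]
            ring
      rw [Finset.sum_congr rfl fun k _ => hterm k, Finset.sum_add_distrib]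
      simp
    have hsum2 : ∑ k, ((⇑(B k)) ⬝ᵥ x)^2 = a^2 + b^2 := by
      have hterm : ∀ k, ((⇑(B k)) ⬝ᵥ x)^2 =
          (if k = i then a^2 else 0) + (if k = j then b^2 else 0) := by
        intro k
        rw [hc k]
        rcases eq_or_ne k i with rfl | hki
        · rw [if_pos rfl, if_neg hij, if_pos rfl, if_neg hij]
          ring
        · rcases eq_or_ne k j with rfl | hkj
          · rw [if_neg hki, if_pos rfl, if_neg hki, if_pos rfl]
            ring
          · rw [if_neg hki, if_neg hkj, if_neg hki, if_neg hkj]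
            ring
      rw [Finset.sum_congr rfl fun k _ => hterm k, Finset.sum_add_distrib]
      simp
    have e1 := (aux_expansion h x).1
    have e2 := (aux_expansion h x).2
    have lz := hLz x hx0
    rw [e1, e2, hsum1, hsum2] at lz
    rcases not_and_or.mp hab with ha | hb
    · have ha2 : (0:ℝ) < a^2 := by positivity
      nlinarith [mul_le_mul_of_nonneg_right hj.le (sq_nonneg b),
        mul_lt_mul_of_pos_right hi ha2]
    · have hb2 : (0:ℝ) < b^2 := by positivity
      nlinarith [mul_le_mul_of_nonneg_right hi.le (sq_nonneg a),
        mul_lt_mul_of_pos_right hj hb2]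
  -- two eigenvalues at most μ
  have hA2 : ∃ i j : Fin (n+1) ⊕ Unit, i ≠ j ∧ ev i ≤ μ ∧ ev j ≤ μ := by
    by_contra hcon
    push_neg at hcon
    obtain ⟨i₀, hi₀⟩ : ∃ i₀, ∀ k, k ≠ i₀ → μ < ev k := by
      by_cases hex : ∃ i, ev i ≤ μ
      · obtain ⟨i₀, hi₀⟩ := hex
        exact ⟨i₀, fun k hk => hcon i₀ k (fun hh => hk hh.symm) hi₀⟩
      · push_neg at hex
        exact ⟨Sum.inr (), fun k _ => hex k⟩
    set xv : (Fin (n+1) ⊕ Unit) → ℝ := Sum.elim v 0 with hxvdef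
    set xw : (Fin (n+1) ⊕ Unit) → ℝ := Sum.elim w 0 with hxwdef
    obtain ⟨a, b, hab, hortho⟩ : ∃ a b : ℝ, ¬(a = 0 ∧ b = 0) ∧
        a * ((⇑(B i₀)) ⬝ᵥ xv) + b * ((⇑(B i₀)) ⬝ᵥ xw) = 0 := by
      by_cases hbi : (⇑(B i₀)) ⬝ᵥ xv = 0
      · exact ⟨1, 0, by simp, by simp [hbi]⟩
      · exact ⟨(⇑(B i₀)) ⬝ᵥ xw, -((⇑(B i₀)) ⬝ᵥ xv),
          fun hc => hbi (by simpa using hc.2), by ring⟩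
    set y : Fin (n+1) → ℝ := a • v + b • w with hydef
    have hyQ : Qt *ᵥ y = lam • y := by
      rw [hydef, Matrix.mulVec_add, Matrix.mulVec_smul, Matrix.mulVec_smul, hv, hw]
      simp [smul_smul, mul_comm, smul_add]
    have hy0 : y ≠ 0 := by
      intro h0
      exact hab (hvw.eq_zero_of_pair (by rw [← hydef]; exact h0))
    set x : (Fin (n+1) ⊕ Unit) → ℝ := Sum.elim y 0 with hxdef
    have hxvw : ∀ r, x r = a * xv r + b * xw r := by
      intro r
      rcases r with r | u
      · simp [hxdef, hxvdef, hxwdef, hydef]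
      · simp [hxdef, hxvdef, hxwdef]
    have hci₀ : (⇑(B i₀)) ⬝ᵥ x = 0 := by
      have : (⇑(B i₀)) ⬝ᵥ x = a * ((⇑(B i₀)) ⬝ᵥ xv) + b * ((⇑(B i₀)) ⬝ᵥ xw) := by
        simp only [dotProduct, Finset.mul_sum, mul_add]
        rw [← Finset.sum_add_distrib]
        refine Finset.sum_congr rfl fun r _ => ?_
        rw [hxvw r]
        ring
      rw [this, hortho]
    have e1 := (aux_expansion h x).1
    have e2 := (aux_expansion h x).2
    have heq : x ⬝ᵥ V *ᵥ x = μ * (x ⬝ᵥ x) := by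
      rw [hxdef, hLe y hyQ, hnorm y]
    have hxxpos : 0 < x ⬝ᵥ x := by
      rw [hxdef, hnorm y]
      have hnn : 0 ≤ y ⬝ᵥ y := Finset.sum_nonneg fun i _ => mul_self_nonneg _
      rcases hnn.lt_or_eq with hlt | heq0
      · exact hlt
      · exact absurd ((dotProduct_self_eq_zero).mp heq0.symm) hy0
    have hkey : ∑ k, (ev k - μ) * ((⇑(B k)) ⬝ᵥ x)^2 = 0 := by
      have hsplit : ∑ k, (ev k - μ) * ((⇑(B k)) ⬝ᵥ x)^2 =
          (∑ k, ev k * ((⇑(B k)) ⬝ᵥ x)^2) - μ * ∑ k, ((⇑(B k)) ⬝ᵥ x)^2 := by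
        rw [Finset.mul_sum, ← Finset.sum_sub_distrib]
        refine Finset.sum_congr rfl fun k _ => ?_
        ring
      rw [hsplit, ← e1, ← e2, heq]
      ring
    have hnn : ∀ k ∈ Finset.univ, (0:ℝ) ≤ (ev k - μ) * ((⇑(B k)) ⬝ᵥ x)^2 := by
      intro k _
      rcases eq_or_ne k i₀ with rfl | hk
      · rw [hci₀]
        simp
      · exact mul_nonneg (by linarith [hi₀ k hk]) (sq_nonneg _)
    have hall := (Finset.sum_eq_zero_iff_of_nonneg hnn).mp hkey
    have hzero : ∀ k, (⇑(B k)) ⬝ᵥ x = 0 := by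
      intro k
      rcases eq_or_ne k i₀ with rfl | hk
      · exact hci₀
      · have hk0 := hall k (Finset.mem_univ k)
        have hpos : 0 < ev k - μ := by linarith [hi₀ k hk]
        have hsq : ((⇑(B k)) ⬝ᵥ x)^2 = 0 := by
          rcases mul_eq_zero.mp hk0 with hc | hc
          · exact absurd hc (by positivity)
          · exact hc
        exact (pow_eq_zero_iff two_ne_zero).mp hsq
    have : x ⬝ᵥ x = 0 := by
      rw [e2]
      exact Finset.sum_eq_zero fun k _ => by rw [hzero k]; simp
    linarith
  -- sorting
  let e : (Fin (n+1) ⊕ Unit) ≃ Fin (n+2) :=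
    (Equiv.sumCongr (Equiv.refl (Fin (n+1))) (Equiv.ofUnique Unit (Fin 1))).trans
      finSumFinEquiv
  let f : Fin (n+2) → ℝ := fun p => ev (e.symm p)
  let π := Tuple.sort f
  have hmono : Monotone (f ∘ π) := Tuple.monotone_sort f
  have hσ : ∀ i, (e.trans π.symm).symm i = e.symm (π i) := by
    intro i
    simp [Equiv.symm_trans_apply]
  refine ⟨e.trans π.symm, ?_, ?_⟩
  · have : (fun i => ev ((e.trans π.symm).symm i)) = f ∘ π := by
      funext i
      simp [hσ i, f]
    rw [hevdef] at this
    exact this ▸ hmono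
  · rw [show ev ((e.trans π.symm).symm 1) = f (π 1) from by rw [hσ 1]]
    have hub : f (π 1) ≤ μ := by
      obtain ⟨i, j, hij, hi, hj⟩ := hA2
      set p := π.symm (e i) with hpdef
      set q := π.symm (e j) with hqdef
      have hpq : p ≠ q := by
        intro hpq'
        exact hij (e.injective (π.symm.injective (by rw [← hpdef, ← hqdef, hpq'])))
      have hfp : f (π p) = ev i := by simp [hpdef, f]
      have hfq : f (π q) = ev j := by simp [hqdef, f]
      have hone : ∀ p q : Fin (n+2), p ≠ q → p ≤ q → (1 : Fin (n+2)) ≤ q := by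
        intro p q hpq hle
        have hq0 : q ≠ 0 := by
          rintro rfl
          exact hpq (le_antisymm hle (Fin.zero_le p))
        have h0 : 0 < q.val := by
          have := Fin.pos_iff_ne_zero.mpr hq0
          exact Fin.lt_def.mp this
        rw [Fin.le_def, Fin.val_one]
        omega
      rcases le_total p q with hle | hle
      · calc f (π 1) ≤ f (π q) := hmono (hone p q hpq hle)
          _ = ev j := hfq
          _ ≤ μ := hj
      · calc f (π 1) ≤ f (π p) := hmono (hone q p (Ne.symm hpq) hle)
          _ = ev i := hfp
          _ ≤ μ := hi
    have hlb2 : μ ≤ f (π 1) := by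
      by_contra hlt
      push_neg at hlt
      have h01 : f (π 0) ≤ f (π 1) := hmono (Fin.zero_le 1)
      have hne : e.symm (π 0) ≠ e.symm (π 1) := by
        intro hh
        have : (0 : Fin (n+2)) = 1 := π.injective (e.symm.injective hh)
        simp at this
      exact absurd (hB2 (e.symm (π 0)) (e.symm (π 1)) hne
        (lt_of_le_of_lt h01 hlt) hlt) (fun hf => hf)
    linarith
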